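/- arXiv:1407.1923 — 2 statements merged into one kernel-verified Lean document; each statement's English description precedes it below -/
import Mathlib

section
/- Let Z = convexHull{(0,0),(3,0),(2,1),(1,1)} (the trapezoid with parallel sides of lengths 3 and 1, height 1, and area 2 — the largest Sei Shōnagon puzzle piece), and let P = convexHull{(0,0),(1,0),(9,8),(8,8)} (the parallelogram with side lengths 1 and 8√2). Then there is no isometry f of ℝ² with f(Z) ⊆ P. -/
open Real

noncomputable section

/-- The Euclidean plane `ℝ²`. -/
abbrev Pt : Type := EuclideanSpace ℝ (Fin 2)

/-- The point `(x, y)` of the plane. -/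
def pt (x y : ℝ) : Pt := (WithLp.equiv 2 (Fin 2 → ℝ)).symm ![x, y]

/-- The closed isosceles right triangle with vertices `(0,0)`, `(1,0)`, `(0,1)`. -/
def T : Set Pt := convexHull ℝ {pt 0 0, pt 1 0, pt 0 1}

/-- `S` is tileable by `n` copies of `T`: there are isometries `f₁, …, fₙ` of the plane
(possibly orientation-reversing) such that the sets `fᵢ(T)` have pairwise disjoint
interiors and their union is `S`. -/
def TileableBy (S : Set Pt) (n : ℕ) : Prop :=
  ∃ f : Fin n → (Pt ≃ᵢ Pt),
    (∀ i j, i ≠ j → Disjoint (interior (f i '' T)) (interior (f j '' T))) ∧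
    S = ⋃ i, f i '' T

/-- Two subsets of the plane are congruent if some isometry maps one onto the other. -/
def PlaneCongruent (P Q : Set Pt) : Prop := ∃ f : Pt ≃ᵢ Pt, f '' P = Q

/-- The family of pieces `P₁, …, P_k` forms `S`: there are isometries `g₁, …, g_k` of the
plane such that the sets `gᵢ(Pᵢ)` have pairwise disjoint interiors and their union is `S`. -/
def Forms {k : ℕ} (P : Fin k → Set Pt) (S : Set Pt) : Prop :=
  ∃ g : Fin k → (Pt ≃ᵢ Pt),
    (∀ i j, i ≠ j → Disjoint (interior (g i '' P i)) (interior (g j '' P j))) ∧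
    S = ⋃ i, g i '' P i

open scoped RealInnerProductSpace

lemma inner_pt_right (w : Pt) (a b : ℝ) : ⟪w, pt a b⟫ = w 0 * a + w 1 * b := by
  simp [pt, PiLp.inner_apply, Fin.sum_univ_two]; ring

lemma pt_sub (x y a b : ℝ) : pt x y - pt a b = pt (x - a) (y - b) := by
  ext i; fin_cases i <;> simp [pt]

/-- No isometric copy of the large trapezoid piece `Z` (parallel sides 3 and 1, height 1)
fits inside the `1 × 8√2` parallelogram. -/
theorem trapezoid_not_in_thin_parallelogram :
    ¬ ∃ f : Pt ≃ᵢ Pt,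
        f '' convexHull ℝ {pt 0 0, pt 3 0, pt 2 1, pt 1 1} ⊆
          convexHull ℝ {pt 0 0, pt 1 0, pt 9 8, pt 8 8} := by
  rintro ⟨f, hf⟩
  set u : Pt := pt 1 (-1) with hu
  -- every point of the parallelogram has ⟪u, ·⟫ in [0,1]
  have hP : ∀ p ∈ convexHull ℝ ({pt 0 0, pt 1 0, pt 9 8, pt 8 8} : Set Pt),
      ⟪u, p⟫ ∈ Set.Icc (0:ℝ) 1 := by
    intro p hp
    have hconv : Convex ℝ {q : Pt | ⟪u, q⟫ ∈ Set.Icc (0:ℝ) 1} := by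
      have : {q : Pt | ⟪u, q⟫ ∈ Set.Icc (0:ℝ) 1}
          = (innerSL ℝ u) ⁻¹' Set.Icc (0:ℝ) 1 := rfl
      rw [this]
      exact (convex_Icc 0 1).linear_preimage (innerSL ℝ u).toLinearMap
    refine convexHull_min ?_ hconv hp
    intro q hq
    simp only [Set.mem_insert_iff, Set.mem_singleton_iff] at hq
    rcases hq with h|h|h|h <;> subst h <;>
      simp [Set.mem_setOf_eq, hu, inner_pt_right, pt, PiLp.inner_apply, Fin.sum_univ_two] <;> norm_num
  -- vertices of the trapezoid map into the parallelogram
  have key : ∀ z ∈ ({pt 0 0, pt 3 0, pt 2 1, pt 1 1} : Set Pt),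
      ⟪u, f z⟫ ∈ Set.Icc (0:ℝ) 1 := by
    intro z hz
    exact hP _ (hf ⟨z, subset_convexHull ℝ _ hz, rfl⟩)
  have h0 := key (pt 0 0) (by simp)
  have h1 := key (pt 3 0) (by simp)
  have h2 := key (pt 2 1) (by simp)
  have h3 := key (pt 1 1) (by simp)
  -- affine structure of f
  set A := f.toRealAffineIsometryEquiv with hA
  set L := A.linearIsometryEquiv with hL
  have hfx : ∀ x : Pt, f x = A x := fun x => by
    rw [hA, IsometryEquiv.coeFn_toRealAffineIsometryEquiv]
  have hdiff : ∀ x y : Pt, f x - f y = L (x - y) := by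
    intro x y
    rw [hfx, hfx]
    have := A.toAffineIsometry.toAffineMap.linearMap_vsub x y
    have h2 := this.symm
    simp [vsub_eq_sub] at h2
    rw [map_sub]; exact h2
  set w : Pt := L.symm u with hw
  have hinner : ∀ x y : Pt, ⟪u, f x⟫ - ⟪u, f y⟫ = ⟪w, x - y⟫ := by
    intro x y
    rw [← inner_sub_right, hdiff]
    conv_lhs => rw [show u = L w by rw [hw]; simp]
    exact L.inner_map_map w (x - y)
  -- norm of w
  have hnw : w 0 ^ 2 + w 1 ^ 2 = 2 := by
    have e1 : ⟪w, w⟫ = w 0 ^ 2 + w 1 ^ 2 := by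
      rw [show w = pt (w 0) (w 1) from by ext i; fin_cases i <;> simp [pt]] at *
      rw [inner_pt_right]; simp [pt]; ring
    have e2 : ‖w‖ = ‖u‖ := L.symm.norm_map u
    have e3 : ⟪u, u⟫ = 2 := by rw [hu, inner_pt_right]; simp [pt]; norm_num
    have e4 : ⟪w, w⟫ = ⟪u, u⟫ := by
      rw [real_inner_self_eq_norm_sq, real_inner_self_eq_norm_sq, e2]
    rw [← e1, e4, e3]
  -- the two width constraints
  have d1 : ⟪u, f (pt 1 1)⟫ - ⟪u, f (pt 0 0)⟫ = w 0 + w 1 := by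
    rw [hinner, pt_sub]; norm_num [inner_pt_right, pt, PiLp.inner_apply, Fin.sum_univ_two]
  have d2 : ⟪u, f (pt 3 0)⟫ - ⟪u, f (pt 2 1)⟫ = w 0 - w 1 := by
    rw [hinner, pt_sub]; norm_num [inner_pt_right, pt, PiLp.inner_apply, Fin.sum_univ_two]; ring
  simp only [Set.mem_Icc] at h0 h1 h2 h3
  nlinarith [h0.1, h0.2, h1.1, h1.2, h2.1, h2.2, h3.1, h3.2, sq_nonneg (w 0 + w 1), sq_nonneg (w 0 - w 1)]
end
end

section
/- The parallelogram with side lengths 1 and 8√2, namely convexHull{(0,0),(1,0),(9,8),(8,8)} ⊆ ℝ², is tileable by 16 copies of T. -/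
open Real

noncomputable section

/-! ### Auxiliary material -/

lemma pt_apply0 (x y : ℝ) : pt x y 0 = x := rfl
lemma pt_apply1 (x y : ℝ) : pt x y 1 = y := rfl
lemma pt_eta (p : Pt) : pt (p 0) (p 1) = p := by
  ext i; fin_cases i <;> rfl

lemma combo3 {v1 v2 v3 : Pt} {a b c : ℝ} (ha : 0 ≤ a) (hb : 0 ≤ b) (hc : 0 ≤ c)
    (h : a + b + c = 1) : a • v1 + b • v2 + c • v3 ∈ convexHull ℝ {v1, v2, v3} := by
  have key := Finset.centerMass_mem_convexHull (s := ({v1, v2, v3} : Set Pt))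
    (Finset.univ : Finset (Fin 3)) (w := ![a, b, c]) (z := ![v1, v2, v3])
    (by intro i _; fin_cases i <;> assumption)
    (by simp [Fin.sum_univ_three]; linarith)
    (by intro i _; fin_cases i <;> simp [Set.mem_insert_iff])
  rw [Finset.centerMass, Fin.sum_univ_three, Fin.sum_univ_three] at key
  simpa [h] using key

lemma combo4 {v1 v2 v3 v4 : Pt} {a b c d : ℝ} (ha : 0 ≤ a) (hb : 0 ≤ b) (hc : 0 ≤ c)
    (hd : 0 ≤ d) (h : a + b + c + d = 1) :
    a • v1 + b • v2 + c • v3 + d • v4 ∈ convexHull ℝ {v1, v2, v3, v4} := by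
  have key := Finset.centerMass_mem_convexHull (s := ({v1, v2, v3, v4} : Set Pt))
    (Finset.univ : Finset (Fin 4)) (w := ![a, b, c, d]) (z := ![v1, v2, v3, v4])
    (by intro i _; fin_cases i <;> assumption)
    (by simp [Fin.sum_univ_four]; linarith)
    (by intro i _; fin_cases i <;> simp [Set.mem_insert_iff])
  rw [Finset.centerMass, Fin.sum_univ_four, Fin.sum_univ_four] at key
  simpa [h] using key

/-! ### The triangle as an inequality set -/

lemma T_eq : T = {p : Pt | 0 ≤ p 0 ∧ 0 ≤ p 1 ∧ p 0 + p 1 ≤ 1} := by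
  apply subset_antisymm
  · apply convexHull_min
    · intro q hq
      simp only [Set.mem_insert_iff, Set.mem_singleton_iff] at hq
      rcases hq with rfl | rfl | rfl <;>
        simp [Set.mem_setOf_eq, pt_apply0, pt_apply1]
    · intro x hx y hy s t hs ht hst
      simp only [Set.mem_setOf_eq, PiLp.add_apply, PiLp.smul_apply, smul_eq_mul] at *
      obtain ⟨hx0, hx1, hx2⟩ := hx
      obtain ⟨hy0, hy1, hy2⟩ := hy
      refine ⟨by nlinarith, by nlinarith, by nlinarith⟩
  · rintro p ⟨h0, h1, h2⟩
    have hp : p = (1 - p 0 - p 1) • pt 0 0 + (p 0) • pt 1 0 + (p 1) • pt 0 1 := by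
      ext i
      fin_cases i <;>
        simp [PiLp.add_apply, PiLp.smul_apply, pt_apply0, pt_apply1, smul_eq_mul] <;> ring
    rw [T, hp]
    exact combo3 (by linarith) h0 h1 (by ring)

/-! ### The isometries -/

def refl0 : Pt ≃ₗᵢ[ℝ] Pt := LinearIsometryEquiv.piLpCongrRight 2
  (fun i => if i = 0 then LinearIsometryEquiv.neg ℝ else LinearIsometryEquiv.refl ℝ ℝ)
def refl1 : Pt ≃ₗᵢ[ℝ] Pt := LinearIsometryEquiv.piLpCongrRight 2
  (fun i => if i = 1 then LinearIsometryEquiv.neg ℝ else LinearIsometryEquiv.refl ℝ ℝ)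

def fA (k : ℝ) : Pt ≃ᵢ Pt := refl0.toIsometryEquiv.trans (IsometryEquiv.addLeft (pt (k+1) k))
def fB (k : ℝ) : Pt ≃ᵢ Pt := refl1.toIsometryEquiv.trans (IsometryEquiv.addLeft (pt (k+1) (k+1)))

lemma fA_apply (k a b : ℝ) : fA k (pt a b) = pt (k+1-a) (k+b) := by
  ext i
  fin_cases i <;>
    (simp [fA, pt, refl0, LinearIsometryEquiv.piLpCongrRight_apply]; try ring)

lemma fB_apply (k a b : ℝ) : fB k (pt a b) = pt (k+1+a) (k+1-b) := by
  ext i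
  fin_cases i <;>
    (simp [fB, pt, refl1, LinearIsometryEquiv.piLpCongrRight_apply]; try ring)

/-! ### The pieces -/

def Aset (k : ℝ) : Set Pt := {p | k ≤ p 1 ∧ p 0 ≤ k + 1 ∧ p 1 ≤ p 0}
def Bset (k : ℝ) : Set Pt := {p | k + 1 ≤ p 0 ∧ p 1 ≤ k + 1 ∧ p 0 ≤ p 1 + 1}
def Pset : Set Pt := {p | 0 ≤ p 1 ∧ p 1 ≤ 8 ∧ p 1 ≤ p 0 ∧ p 0 ≤ p 1 + 1}

lemma fA_image (k : ℝ) : fA k '' T = Aset k := by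
  rw [T_eq]
  ext p
  constructor
  · rintro ⟨q, hq, rfl⟩
    rw [← pt_eta q, fA_apply]
    rw [← pt_eta q] at hq
    simp only [Aset, Set.mem_setOf_eq, pt_apply0, pt_apply1] at hq ⊢
    exact ⟨by linarith [hq.1], by linarith [hq.2.1], by linarith [hq.2.2]⟩
  · intro hp
    obtain ⟨h1, h2, h3⟩ := hp
    refine ⟨pt (k + 1 - p 0) (p 1 - k), ?_, ?_⟩
    · simp only [Set.mem_setOf_eq, pt_apply0, pt_apply1]
      exact ⟨by linarith, by linarith, by linarith⟩
    · rw [fA_apply]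
      have e0 : k + 1 - (k + 1 - p 0) = p 0 := by ring
      have e1 : k + (p 1 - k) = p 1 := by ring
      rw [e0, e1, pt_eta]

lemma fB_image (k : ℝ) : fB k '' T = Bset k := by
  rw [T_eq]
  ext p
  constructor
  · rintro ⟨q, hq, rfl⟩
    rw [← pt_eta q, fB_apply]
    rw [← pt_eta q] at hq
    simp only [Bset, Set.mem_setOf_eq, pt_apply0, pt_apply1] at hq ⊢
    exact ⟨by linarith [hq.1], by linarith [hq.2.1], by linarith [hq.2.2]⟩
  · intro hp
    obtain ⟨h1, h2, h3⟩ := hp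
    refine ⟨pt (p 0 - k - 1) (k + 1 - p 1), ?_, ?_⟩
    · simp only [Set.mem_setOf_eq, pt_apply0, pt_apply1]
      exact ⟨by linarith, by linarith, by linarith⟩
    · rw [fB_apply]
      have e0 : k + 1 + (p 0 - k - 1) = p 0 := by ring
      have e1 : k + 1 - (k + 1 - p 1) = p 1 := by ring
      rw [e0, e1, pt_eta]

/-! ### Empty interior of coordinate lines and disjointness -/

lemma interior_line (i : Fin 2) (c : ℝ) : interior {p : Pt | p i = c} = (∅ : Set Pt) := by
  rw [Set.eq_empty_iff_forall_notMem]
  intro p hp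
  rw [mem_interior_iff_mem_nhds, Metric.mem_nhds_iff] at hp
  obtain ⟨ε, hε, hball⟩ := hp
  have h1 : p i = c := hball (Metric.mem_ball_self hε)
  have h2 : p + (ε/2) • EuclideanSpace.single i (1:ℝ) ∈ {p : Pt | p i = c} := by
    apply hball
    rw [Metric.mem_ball, dist_eq_norm, add_sub_cancel_left, norm_smul,
      EuclideanSpace.norm_single]
    simp [abs_of_pos hε]
    linarith
  have h3 : (p + (ε/2) • EuclideanSpace.single i (1:ℝ)) i = p i + ε/2 := by
    simp [PiLp.add_apply, PiLp.smul_apply, EuclideanSpace.single_apply]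
  rw [Set.mem_setOf_eq, h3, h1] at h2
  linarith

lemma disj_sep {A B : Set Pt} (i : Fin 2) (c : ℝ) (hA : ∀ p ∈ A, p i ≤ c)
    (hB : ∀ p ∈ B, c ≤ p i) : Disjoint (interior A) (interior B) := by
  rw [Set.disjoint_iff_inter_eq_empty, ← interior_inter]
  have hsub : A ∩ B ⊆ {p : Pt | p i = c} := by
    rintro p ⟨ha, hb⟩
    exact le_antisymm (hA p ha) (hB p hb)
  have := interior_mono hsub
  rw [interior_line] at this
  exact Set.subset_empty_iff.mp this

lemma disjAA {a b : ℕ} (h : a < b) : Disjoint (interior (Aset a)) (interior (Aset b)) := by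
  apply disj_sep 1 ((a : ℝ) + 1)
  · rintro p ⟨h1, h2, h3⟩; linarith
  · rintro p ⟨h1, h2, h3⟩
    have : (a : ℝ) + 1 ≤ (b : ℝ) := by exact_mod_cast h
    linarith

lemma disjBB {a b : ℕ} (h : a < b) : Disjoint (interior (Bset a)) (interior (Bset b)) := by
  apply disj_sep 0 ((b : ℝ) + 1)
  · rintro p ⟨h1, h2, h3⟩
    have : (a : ℝ) + 1 ≤ (b : ℝ) := by exact_mod_cast h
    linarith
  · rintro p ⟨h1, h2, h3⟩; linarith

lemma disjAB (a b : ℕ) : Disjoint (interior (Aset a)) (interior (Bset b)) := by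
  rcases le_or_gt a b with h | h
  · apply disj_sep 0 ((b : ℝ) + 1)
    · rintro p ⟨h1, h2, h3⟩
      have : (a : ℝ) ≤ (b : ℝ) := by exact_mod_cast h
      linarith
    · rintro p ⟨h1, h2, h3⟩; linarith
  · refine (disj_sep 1 ((b : ℝ) + 1) ?_ ?_).symm
    · rintro p ⟨h1, h2, h3⟩; linarith
    · rintro p ⟨h1, h2, h3⟩
      have : (b : ℝ) + 1 ≤ (a : ℝ) := by exact_mod_cast h
      linarith

/-! ### The tiling family -/

def piece (i : Fin 16) : Pt ≃ᵢ Pt :=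
  if (i : ℕ) % 2 = 0 then fA (((i : ℕ) / 2 : ℕ) : ℝ) else fB (((i : ℕ) / 2 : ℕ) : ℝ)

def tri (i : Fin 16) : Set Pt :=
  if (i : ℕ) % 2 = 0 then Aset (((i : ℕ) / 2 : ℕ) : ℝ) else Bset (((i : ℕ) / 2 : ℕ) : ℝ)

lemma piece_image (i : Fin 16) : piece i '' T = tri i := by
  unfold piece tri
  split_ifs
  · exact fA_image _
  · exact fB_image _

lemma tri_disj {i j : Fin 16} (h : i ≠ j) :
    Disjoint (interior (tri i)) (interior (tri j)) := by
  have hij : (i : ℕ) ≠ (j : ℕ) := fun hh => h (Fin.ext hh)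
  unfold tri
  split_ifs with h1 h2 h2
  · rcases lt_or_gt_of_ne (show (i : ℕ)/2 ≠ (j : ℕ)/2 by omega) with hlt | hlt
    · exact disjAA hlt
    · exact (disjAA hlt).symm
  · exact disjAB _ _
  · exact (disjAB _ _).symm
  · rcases lt_or_gt_of_ne (show (i : ℕ)/2 ≠ (j : ℕ)/2 by omega) with hlt | hlt
    · exact disjBB hlt
    · exact (disjBB hlt).symm

/-! ### The union -/

lemma tri_subset_Pset (i : Fin 16) : tri i ⊆ Pset := by
  have hi : (i : ℕ) / 2 ≤ 7 := by omega
  have hi' : (((i : ℕ) / 2 : ℕ) : ℝ) ≤ 7 := by exact_mod_cast hi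
  have hi0 : (0 : ℝ) ≤ (((i : ℕ) / 2 : ℕ) : ℝ) := Nat.cast_nonneg _
  unfold tri
  split_ifs
  · rintro p ⟨h1, h2, h3⟩
    exact ⟨by linarith, by linarith, h3, by linarith⟩
  · rintro p ⟨h1, h2, h3⟩
    exact ⟨by linarith, by linarith, by linarith, h3⟩

lemma Pset_subset_union : Pset ⊆ ⋃ i, tri i := by
  rintro p ⟨h0, h8, hlo, hhi⟩
  set k : ℕ := min ⌊p 1⌋₊ 7 with hk
  have hk7 : k ≤ 7 := min_le_right _ _
  have hkle : (k : ℝ) ≤ p 1 := by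
    have h1 : (⌊p 1⌋₊ : ℝ) ≤ p 1 := Nat.floor_le h0
    have h2 : (k : ℕ) ≤ ⌊p 1⌋₊ := min_le_left _ _
    have : (k : ℝ) ≤ (⌊p 1⌋₊ : ℝ) := by exact_mod_cast h2
    linarith
  have hkge : p 1 ≤ (k : ℝ) + 1 := by
    rcases le_or_gt ⌊p 1⌋₊ 7 with hc | hc
    · have : k = ⌊p 1⌋₊ := min_eq_left hc
      rw [this]
      exact le_of_lt (Nat.lt_floor_add_one _)
    · have : k = 7 := min_eq_right (le_of_lt hc)
      rw [this]; norm_num; linarith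
  rcases le_or_gt (p 0) ((k : ℝ) + 1) with hx | hx
  · refine Set.mem_iUnion.mpr ⟨⟨2 * k, by omega⟩, ?_⟩
    unfold tri
    have e1 : ((⟨2 * k, by omega⟩ : Fin 16) : ℕ) = 2 * k := rfl
    rw [e1, if_pos (by omega)]
    have e2 : (2 * k) / 2 = k := by omega
    rw [e2]
    exact ⟨hkle, hx, hlo⟩
  · refine Set.mem_iUnion.mpr ⟨⟨2 * k + 1, by omega⟩, ?_⟩
    unfold tri
    have e1 : ((⟨2 * k + 1, by omega⟩ : Fin 16) : ℕ) = 2 * k + 1 := rfl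
    rw [e1, if_neg (by omega)]
    have e2 : (2 * k + 1) / 2 = k := by omega
    rw [e2]
    exact ⟨le_of_lt hx, hkge, by linarith⟩

lemma hull4_eq : convexHull ℝ {pt 0 0, pt 1 0, pt 9 8, pt 8 8} = Pset := by
  apply subset_antisymm
  · apply convexHull_min
    · intro q hq
      simp only [Set.mem_insert_iff, Set.mem_singleton_iff] at hq
      rcases hq with rfl | rfl | rfl | rfl <;>
        (simp only [Pset, Set.mem_setOf_eq, pt_apply0, pt_apply1]; norm_num)
    · intro x hx y hy s t hs ht hst
      simp only [Pset, Set.mem_setOf_eq, PiLp.add_apply, PiLp.smul_apply, smul_eq_mul] at *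
      obtain ⟨hx0, hx1, hx2, hx3⟩ := hx
      obtain ⟨hy0, hy1, hy2, hy3⟩ := hy
      refine ⟨by nlinarith, by nlinarith, by nlinarith, by nlinarith⟩
  · rintro p ⟨h0, h8, hlo, hhi⟩
    set s : ℝ := p 0 - p 1 with hs
    set t : ℝ := p 1 / 8 with ht
    have hs0 : 0 ≤ s := by simp [hs]; linarith
    have hs1 : s ≤ 1 := by simp [hs]; linarith
    have ht0 : 0 ≤ t := by simp [ht]; linarith
    have ht1 : t ≤ 1 := by simp [ht]; linarith
    rcases le_total s t with hc | hc
    · have hp : p = (1 - t) • pt 0 0 + (0 : ℝ) • pt 1 0 + s • pt 9 8 + (t - s) • pt 8 8 := by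
        ext i
        fin_cases i <;>
          (simp [PiLp.add_apply, PiLp.smul_apply, pt_apply0, pt_apply1, smul_eq_mul, hs, ht]
           try ring)
      rw [hp]
      exact combo4 (by linarith) le_rfl hs0 (by linarith) (by ring)
    · have hp : p = (1 - s) • pt 0 0 + (s - t) • pt 1 0 + t • pt 9 8 + (0 : ℝ) • pt 8 8 := by
        ext i
        fin_cases i <;>
          (simp [PiLp.add_apply, PiLp.smul_apply, pt_apply0, pt_apply1, smul_eq_mul, hs, ht]
           try ring)
      rw [hp]
      exact combo4 (by linarith) (by linarith) ht0 le_rfl (by ring)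

/-- The parallelogram with side lengths `1` and `8√2` is tileable by 16 copies of `T`. -/
theorem thin_parallelogram_tileable :
    TileableBy (convexHull ℝ {pt 0 0, pt 1 0, pt 9 8, pt 8 8}) 16 := by
  refine ⟨piece, ?_, ?_⟩
  · intro i j hij
    rw [piece_image, piece_image]
    exact tri_disj hij
  · have hU : (⋃ i, piece i '' T) = ⋃ i, tri i := Set.iUnion_congr piece_image
    rw [hU, hull4_eq]
    exact subset_antisymm Pset_subset_union (Set.iUnion_subset tri_subset_Pset)
end
end
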